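/- Let $G$ be a group, $H$ a subgroup of index 2, $c \in G \setminus H$, and $\chi \colon H \to K^\times$ a character over an algebraically closed field $K$ with $\chi \neq \chi^c$ (so $\rho := \mathrm{Ind}_H^G \chi$ is irreducible). Then $\mathrm{ad}^0 \rho \cong \eta_H \oplus \mathrm{Ind}_H^G(\chi/\chi^c)$, where $\eta_H$ is the quadratic character of $G$ with kernel $H$. -/

import Mathlib

open scoped Classical

/-- Extend a character `χ` of `H` to a function on `G` by zero. -/
noncomputable def extFun {G K : Type*} [Group G] [Field K] (H : Subgroup G)
    (χ : H →* Kˣ) (g : G) : K :=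
  if h : g ∈ H then (χ ⟨g, h⟩ : K) else 0

/-- The matrices of the representation of `G` induced from a function `f` on `G`
(restricting to a character of `H`), relative to the choice of `c ∉ H`:
`g ↦ diag (f g, f (c⁻¹ g c))` for `g ∈ H`, and the antidiagonal matrix with entries
`f (g c)` and `f (c⁻¹ g)` otherwise. -/
noncomputable def indMat {G K : Type*} [Group G] [Field K] (H : Subgroup G)
    (f : G → K) (c g : G) : Matrix (Fin 2) (Fin 2) K :=
  if g ∈ H then !![f g, 0; 0, f (c⁻¹ * g * c)] else !![0, f (g * c); f (c⁻¹ * g), 0]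

/-- The ratio `χ⁻ = χ / χᶜ`, as a function on `G` (supported on `H`). -/
noncomputable def quotChar {G K : Type*} [Group G] [Field K] (H : Subgroup G)
    (χ : H →* Kˣ) (c g : G) : K :=
  extFun H χ g * (extFun H χ (c⁻¹ * g * c))⁻¹

/-- The matrices of the `3`-dimensional representation `η_H ⊕ Ind_H^G (χ/χᶜ)`. -/
noncomputable def adTarget {G K : Type*} [Group G] [Field K] (H : Subgroup G)
    (χ : H →* Kˣ) (c g : G) : Matrix (Fin 3) (Fin 3) K :=
  !![(if g ∈ H then 1 else -1 : K), 0, 0;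
     0, indMat H (quotChar H χ c) c g 0 0, indMat H (quotChar H χ c) c g 0 1;
     0, indMat H (quotChar H χ c) c g 1 0, indMat H (quotChar H χ c) c g 1 1]

/-- `χ` of a product, with explicit membership proofs. -/
lemma chi_mul {G K : Type*} [Group G] [Field K] {H : Subgroup G} (χ : H →* Kˣ)
    {u v w : G} (hu : u ∈ H) (hv : v ∈ H) (hw : w ∈ H) (e : w = u * v) :
    (χ ⟨w, hw⟩ : K) = (χ ⟨u, hu⟩ : K) * (χ ⟨v, hv⟩ : K) := by
  subst e
  rw [show (⟨u * v, hw⟩ : H) = ⟨u, hu⟩ * ⟨v, hv⟩ from rfl, map_mul, Units.val_mul]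

/-- `χ` of an inverse, with explicit membership proofs. -/
lemma chi_inv {G K : Type*} [Group G] [Field K] {H : Subgroup G} (χ : H →* Kˣ)
    {u w : G} (hu : u ∈ H) (hw : w ∈ H) (e : w = u⁻¹) :
    (χ ⟨w, hw⟩ : K) = ((χ ⟨u, hu⟩ : K))⁻¹ := by
  subst e
  rw [show (⟨u⁻¹, hw⟩ : H) = (⟨u, hu⟩)⁻¹ from rfl, map_inv]
  simp

lemma conj_diag {K : Type*} [Field K] (a b x y z : K) :
    !![a, 0; 0, b] * !![x, y; z, -x] * !![a⁻¹, 0; 0, b⁻¹] =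
      !![x * (a * a⁻¹), a * y * b⁻¹; b * z * a⁻¹, -x * (b * b⁻¹)] := by
  rw [Matrix.mul_fin_two, Matrix.mul_fin_two]
  congr 1 <;> ring

lemma conj_anti {K : Type*} [Field K] (p q x y z : K) :
    !![0, p; q, 0] * !![x, y; z, -x] * !![0, q⁻¹; p⁻¹, 0] =
      !![-x * (p * p⁻¹), p * z * q⁻¹; q * y * p⁻¹, x * (q * q⁻¹)] := by
  rw [Matrix.mul_fin_two, Matrix.mul_fin_two]
  congr 1 <;> ring

lemma main_diag {K : Type*} [Field K] (a b s x y z : K)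
    (ha : a ≠ 0) (hb : b ≠ 0) (hs : s ≠ 0) :
    (fun Y : Matrix (Fin 2) (Fin 2) K => ![Y 0 0, Y 0 1, Y 1 0])
      (!![a, 0; 0, b] * !![x, y; z, -x] * !![a⁻¹, 0; 0, b⁻¹]) =
    ((!![1,0,0;0,s,0;0,0,1] : Matrix (Fin 3) (Fin 3) K) *
      !![1,0,0;0,a*b⁻¹,0;0,0,b*a⁻¹] * !![1,0,0;0,s⁻¹,0;0,0,1]).mulVec ![x, y, z] := by
  rw [conj_diag, Matrix.mul_fin_three, Matrix.mul_fin_three]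
  funext i
  fin_cases i <;>
    · simp [Matrix.mulVec, dotProduct, Fin.sum_univ_three]
      field_simp
      try ring

lemma main_anti {K : Type*} [Field K] (p q s x y z : K)
    (hp : p ≠ 0) (hq : q ≠ 0) (hs : s ≠ 0) :
    (fun Y : Matrix (Fin 2) (Fin 2) K => ![Y 0 0, Y 0 1, Y 1 0])
      (!![0, p; q, 0] * !![x, y; z, -x] * !![0, q⁻¹; p⁻¹, 0]) =
    ((!![1,0,0;0,s,0;0,0,1] : Matrix (Fin 3) (Fin 3) K) *
      !![-1,0,0;0,0,p*(q*s)⁻¹;0,q*(s⁻¹*p)⁻¹,0] * !![1,0,0;0,s⁻¹,0;0,0,1]).mulVec ![x, y, z] := by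
  rw [conj_anti, Matrix.mul_fin_three, Matrix.mul_fin_three]
  funext i
  fin_cases i <;>
    · simp [Matrix.mulVec, dotProduct, Fin.sum_univ_three]
      field_simp
      try ring

/-- Let `H ≤ G` have index `2`, `c ∉ H`, and `χ : H → Kˣ` a character with
`χ ≠ χᶜ`, over an algebraically closed field `K` of characteristic `≠ 2`.  Then the
adjoint representation `ad⁰ (Ind_H^G χ)` — the conjugation action on trace-zero `2×2`
matrices, read in the coordinates `X ↦ (X₀₀, X₀₁, X₁₀)` — is isomorphic (by a fixed
invertible change of basis `T`) to `η_H ⊕ Ind_H^G (χ/χᶜ)`. -/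
theorem stmt_11 {G K : Type*} [Group G] [Field K] [IsAlgClosed K] (hchar : (2 : K) ≠ 0)
    (H : Subgroup G) (hN : H.Normal) (hidx : H.index = 2) (c : G) (hc : c ∉ H)
    (χ : H →* Kˣ)
    (hne : ∃ h : H, extFun H χ (c⁻¹ * (h : G) * c) ≠ extFun H χ (h : G)) :
    ∃ T : Matrix (Fin 3) (Fin 3) K, IsUnit T.det ∧
      ∀ g : G, ∀ X : Matrix (Fin 2) (Fin 2) K, X.trace = 0 →
        (fun Y : Matrix (Fin 2) (Fin 2) K => ![Y 0 0, Y 0 1, Y 1 0])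
            (indMat H (extFun H χ) c g * X * (indMat H (extFun H χ) c g)⁻¹) =
          (T * adTarget H χ c g * T⁻¹).mulVec ![X 0 0, X 0 1, X 1 0] := by
  have hcc : c * c ∈ H := Subgroup.mul_self_mem_of_index_two hidx c
  set s : K := (χ ⟨c * c, hcc⟩ : K) with hs
  have hs0 : s ≠ 0 := Units.ne_zero _
  refine ⟨!![1, 0, 0; 0, s, 0; 0, 0, 1], ?_, ?_⟩
  · refine isUnit_iff_ne_zero.mpr ?_
    simp [Matrix.det_fin_three, hs0]
  have hTinv : (!![1, 0, 0; 0, s, 0; 0, 0, 1] : Matrix (Fin 3) (Fin 3) K)⁻¹ =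
      !![1, 0, 0; 0, s⁻¹, 0; 0, 0, 1] := by
    refine Matrix.inv_eq_right_inv ?_
    rw [Matrix.mul_fin_three, Matrix.one_fin_three]
    simp [mul_inv_cancel₀ hs0]
  rw [hTinv]
  intro g X hX
  have hX11 : X 1 1 = -X 0 0 := by
    rw [Matrix.trace_fin_two] at hX; linear_combination hX
  have hXeta : X = !![X 0 0, X 0 1; X 1 0, -(X 0 0)] := by
    rw [← hX11]; exact Matrix.etaExpand_eq X ▸ rfl
  by_cases hg : g ∈ H
  · -- diagonal case
    have hgc : c⁻¹ * g * c ∈ H := by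
      have := hN.conj_mem g hg c⁻¹
      simpa using this
    set a : K := (χ ⟨g, hg⟩ : K) with ha
    set b : K := (χ ⟨c⁻¹ * g * c, hgc⟩ : K) with hb
    have ha0 : a ≠ 0 := Units.ne_zero _
    have hb0 : b ≠ 0 := Units.ne_zero _
    have hgcc : c⁻¹ * (c⁻¹ * g * c) * c ∈ H := by
      have := hN.conj_mem _ hgc c⁻¹
      simpa using this
    -- χ((c²)⁻¹ g c²) = a
    have hval : extFun H χ (c⁻¹ * (c⁻¹ * g * c) * c) = a := by
      have hgcc2 : g * (c * c) ∈ H := H.mul_mem hg hcc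
      have hinv : (c * c)⁻¹ ∈ H := H.inv_mem hcc
      rw [extFun, dif_pos hgcc,
        chi_mul χ hinv hgcc2 hgcc (by group),
        chi_mul χ hg hcc hgcc2 rfl, chi_inv χ hcc hinv rfl]
      field_simp [mul_comm]
      exact ha.symm
    have hA : indMat H (extFun H χ) c g = !![a, 0; 0, b] := by
      rw [indMat, if_pos hg, extFun, extFun, dif_pos hg, dif_pos hgc]
    have hAinv : (indMat H (extFun H χ) c g)⁻¹ = !![a⁻¹, 0; 0, b⁻¹] := by
      rw [hA]
      refine Matrix.inv_eq_right_inv ?_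
      rw [Matrix.mul_fin_two, Matrix.one_fin_two]
      simp [mul_inv_cancel₀ ha0, mul_inv_cancel₀ hb0]
    have hAd : adTarget H χ c g = !![1, 0, 0; 0, a * b⁻¹, 0; 0, 0, b * a⁻¹] := by
      rw [adTarget, if_pos hg]
      simp only [indMat, if_pos hg, if_pos hgc]
      rw [quotChar, quotChar, hval]
      rw [extFun, extFun, dif_pos hg, dif_pos hgc]
      simp [← ha, ← hb]
    rw [hAinv, hA, hAd]
    conv_lhs => rw [hXeta]
    exact main_diag a b s (X 0 0) (X 0 1) (X 1 0) ha0 hb0 hs0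
  · -- antidiagonal case
    have hcinv : c⁻¹ ∉ H := fun h => hc (by simpa using H.inv_mem h)
    have hgcH : g * c ∈ H := (Subgroup.mul_mem_iff_of_index_two hidx).mpr (iff_of_false hg hc)
    have hcgH : c⁻¹ * g ∈ H :=
      (Subgroup.mul_mem_iff_of_index_two hidx).mpr (iff_of_false hcinv hg)
    set p : K := (χ ⟨g * c, hgcH⟩ : K) with hp
    set q : K := (χ ⟨c⁻¹ * g, hcgH⟩ : K) with hq
    have hp0 : p ≠ 0 := Units.ne_zero _
    have hq0 : q ≠ 0 := Units.ne_zero _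
    have hgc' : c⁻¹ * g * c ∉ H := by
      intro h
      have h2 := hN.conj_mem _ h c
      rw [show c * (c⁻¹ * g * c) * c⁻¹ = g by group] at h2
      exact hg h2
    -- memberships for the quotChar entries
    have hm1 : c⁻¹ * (g * c) * c ∈ H := by
      have : c⁻¹ * (g * c) * c = (c⁻¹ * g) * (c * c) := by group
      rw [this]; exact H.mul_mem hcgH hcc
    have hm2 : c⁻¹ * (c⁻¹ * g) * c ∈ H := by
      have : c⁻¹ * (c⁻¹ * g) * c = (c * c)⁻¹ * (g * c) := by group
      rw [this]; exact H.mul_mem (H.inv_mem hcc) hgcH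
    have hval1 : extFun H χ (c⁻¹ * (g * c) * c) = q * s := by
      rw [extFun, dif_pos hm1, chi_mul χ hcgH hcc hm1 (by group)]
    have hval2 : extFun H χ (c⁻¹ * (c⁻¹ * g) * c) = s⁻¹ * p := by
      have hinv : (c * c)⁻¹ ∈ H := H.inv_mem hcc
      rw [extFun, dif_pos hm2, chi_mul χ hinv hgcH hm2 (by group),
        chi_inv χ hcc hinv rfl]
    have hA : indMat H (extFun H χ) c g = !![0, p; q, 0] := by
      rw [indMat, if_neg hg, extFun, extFun, dif_pos hgcH, dif_pos hcgH]
    have hAinv : (indMat H (extFun H χ) c g)⁻¹ = !![0, q⁻¹; p⁻¹, 0] := by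
      rw [hA]
      refine Matrix.inv_eq_right_inv ?_
      rw [Matrix.mul_fin_two, Matrix.one_fin_two]
      simp [mul_inv_cancel₀ hp0, mul_inv_cancel₀ hq0]
    have hAd : adTarget H χ c g =
        !![-1, 0, 0; 0, 0, p * (q * s)⁻¹; 0, q * (s⁻¹ * p)⁻¹, 0] := by
      rw [adTarget, if_neg hg]
      simp only [indMat, if_neg hg, if_neg hgc']
      rw [quotChar, quotChar, hval1, hval2]
      rw [extFun, extFun, dif_pos hgcH, dif_pos hcgH]
      simp [← hp, ← hq]
    rw [hAinv, hA, hAd]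
    conv_lhs => rw [hXeta]
    exact main_anti p q s (X 0 0) (X 0 1) (X 1 0) hp0 hq0 hs0
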